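/- Let φ be a continuous semiflow on a metric space X with a closed partial order ≤ and an open strict relation ≪ contained in ≤, such that φ is strongly monotone: x ≤ y with x ≠ y implies φ(t,x) ≪ φ(t,y) for all t > 0. If x ≤ y with x ≠ y, then there exist t₀ > 0 and open neighborhoods U of x and V of y such that φ(t,u) ≪ φ(t,v) for all u ∈ U, v ∈ V, and all t ≥ t₀. -/

import Mathlib

/-- Uniform separation for strongly monotone semiflows: if `x ≤ y`, `x ≠ y`,
then some open neighborhoods are eventually strongly ordered pointwise. -/
theorem uniform_separation {X : Type*} [MetricSpace X] [PartialOrder X]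
    (lt : X → X → Prop)
    (hclosed : IsClosed {q : X × X | q.1 ≤ q.2})
    (hlt_le : ∀ a b, lt a b → a ≤ b)
    (hopen : ∀ a b, lt a b → ∃ U V : Set X, IsOpen U ∧ IsOpen V ∧ a ∈ U ∧ b ∈ V ∧
      ∀ u ∈ U, ∀ v ∈ V, lt u v)
    (φ : ℝ → X → X)
    (hφc : Continuous fun q : ℝ × X => φ q.1 q.2)
    (hφ0 : ∀ x, φ 0 x = x)
    (hφadd : ∀ s t : ℝ, 0 ≤ s → 0 ≤ t → ∀ x, φ (s + t) x = φ s (φ t x))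
    (hmono : ∀ x y : X, x ≤ y → x ≠ y → ∀ t : ℝ, 0 < t → lt (φ t x) (φ t y))
    (x y : X) (hxy : x ≤ y) (hne : x ≠ y) :
    ∃ t₀ : ℝ, 0 < t₀ ∧ ∃ U V : Set X, IsOpen U ∧ IsOpen V ∧ x ∈ U ∧ y ∈ V ∧
      ∀ u ∈ U, ∀ v ∈ V, ∀ t : ℝ, t₀ ≤ t → lt (φ t u) (φ t v) := by
  have hφ1c : Continuous fun z : X => φ 1 z := hφc.comp (continuous_const.prodMk continuous_id)
  have hab : lt (φ 1 x) (φ 1 y) := hmono x y hxy hne 1 one_pos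
  set a := φ 1 x with ha
  set b := φ 1 y with hb
  by_cases hab_ne : a = b
  · -- degenerate case: lt a a, so {a} is open and a is a fixed point of the flow
    have haa : lt a a := by rw [hab_ne] at hab ⊢; exact hab
    obtain ⟨W₁, W₂, hW₁, hW₂, haW₁, haW₂, hlt⟩ := hopen a a haa
    have hWsing : W₁ ∩ W₂ = {a} := by
      apply Set.eq_singleton_iff_unique_mem.mpr
      refine ⟨⟨haW₁, haW₂⟩, ?_⟩
      rintro w ⟨hw1, hw2⟩
      exact le_antisymm (hlt_le _ _ (hlt w hw1 a haW₂)) (hlt_le _ _ (hlt a haW₁ w hw2))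
    have hopen_a : IsOpen ({a} : Set X) := hWsing ▸ hW₁.inter hW₂
    have hfc : Continuous fun s : ℝ => φ s a := hφc.comp (continuous_id.prodMk continuous_const)
    have hclopen : IsClopen ((fun s : ℝ => φ s a) ⁻¹' {a}) :=
      ⟨isClosed_singleton.preimage hfc, hopen_a.preimage hfc⟩
    have huniv : ((fun s : ℝ => φ s a) ⁻¹' {a}) = Set.univ :=
      hclopen.eq_univ ⟨0, by simp [hφ0]⟩
    have hfix : ∀ s : ℝ, φ s a = a := fun s => by
      have : s ∈ ((fun s : ℝ => φ s a) ⁻¹' {a}) := huniv ▸ Set.mem_univ s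
      simpa using this
    refine ⟨1, one_pos, (fun z => φ 1 z) ⁻¹' {a}, (fun z => φ 1 z) ⁻¹' {a},
      hopen_a.preimage hφ1c, hopen_a.preimage hφ1c, by simp [ha], by simp [← hb, hab_ne], ?_⟩
    intro u hu v hv t ht
    have key : ∀ w : X, φ 1 w = a → φ t w = a := by
      intro w hw
      have : φ t w = φ (t - 1) (φ 1 w) := by
        have := hφadd (t - 1) 1 (by linarith) zero_le_one w
        rwa [sub_add_cancel] at this
      rw [this, hw, hfix]
    rw [key u hu, key v hv]
    exact haa
  · -- nondegenerate case
    obtain ⟨U', V', hU', hV', haU', hbV', hlt⟩ := hopen a b hab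
    have hr : 0 < dist a b / 2 := by
      have : 0 < dist a b := dist_pos.mpr hab_ne
      linarith
    set r := dist a b / 2 with hrdef
    set U'' := U' ∩ Metric.ball a r with hU''def
    set V'' := V' ∩ Metric.ball b r with hV''def
    have hdisj : ∀ p ∈ U'', ∀ q ∈ V'', p ≠ q := by
      rintro p ⟨-, hp⟩ q ⟨-, hq⟩ rfl
      have h1 : dist p a < r := Metric.mem_ball.mp hp
      have h2 : dist p b < r := Metric.mem_ball.mp hq
      have h3 : dist a b ≤ dist a p + dist p b := dist_triangle a p b
      rw [dist_comm a p] at h3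
      rw [hrdef] at h1 h2
      linarith
    refine ⟨1, one_pos, (fun z => φ 1 z) ⁻¹' U'', (fun z => φ 1 z) ⁻¹' V'',
      (hU'.inter Metric.isOpen_ball).preimage hφ1c,
      (hV'.inter Metric.isOpen_ball).preimage hφ1c,
      ⟨haU', Metric.mem_ball_self hr⟩,
      ⟨hbV', Metric.mem_ball_self hr⟩, ?_⟩
    intro u hu v hv t ht
    have hp : φ 1 u ∈ U'' := hu
    have hq : φ 1 v ∈ V'' := hv
    have hlt1 : lt (φ 1 u) (φ 1 v) := hlt _ hp.1 _ hq.1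
    rcases ht.eq_or_lt with h | h
    · rw [← h]; exact hlt1
    · have h1 : φ t u = φ (t - 1) (φ 1 u) := by
        have := hφadd (t - 1) 1 (by linarith) zero_le_one u
        rwa [sub_add_cancel] at this
      have h2 : φ t v = φ (t - 1) (φ 1 v) := by
        have := hφadd (t - 1) 1 (by linarith) zero_le_one v
        rwa [sub_add_cancel] at this
      rw [h1, h2]
      exact hmono _ _ (hlt_le _ _ hlt1) (hdisj _ hp _ hq) (t - 1) (by linarith)
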